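/- arXiv:0710.1313 — 6 statements merged into one kernel-verified Lean document; each statement's English description precedes it below -/
import Mathlib

section
/- Every semi-free complete semi-vector space is regular: if M is an ℝ≥0-module admitting a semi-basis B, then for all u, v, w ∈ M, u + w = v + w implies u = v (the cancellation law holds in M). -/
open scoped NNReal

/-- A subset `B` of an `ℝ≥0`-module `M` (a complete semi-vector space over `ℝ⁺`)
is a *semi-basis* if every nonzero `m : M` can be written in exactly one way as
`m = ∑ b ∈ t, c b • b` with `t` a nonempty finite subset of `B` and strictly
positive coefficients `c b`. -/
def IsSemiBasis {M : Type*} [AddCommMonoid M] [Module ℝ≥0 M] (B : Set M) : Prop :=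
  ∀ m : M, m ≠ 0 →
    (∃ (t : Finset M) (c : M → ℝ≥0),
        t.Nonempty ∧ ↑t ⊆ B ∧ (∀ b ∈ t, 0 < c b) ∧ m = ∑ b ∈ t, c b • b) ∧
    ∀ (t t' : Finset M) (c c' : M → ℝ≥0),
      t.Nonempty → ↑t ⊆ B → (∀ b ∈ t, 0 < c b) → m = ∑ b ∈ t, c b • b →
      t'.Nonempty → ↑t' ⊆ B → (∀ b ∈ t', 0 < c' b) → m = ∑ b ∈ t', c' b • b →
      t = t' ∧ ∀ b ∈ t, c b = c' b

open scoped Classical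

section Aux
variable {M : Type*} [AddCommMonoid M] [Module ℝ≥0 M] {B : Set M}

noncomputable def sbT (hB : IsSemiBasis B) (m : M) : Finset M :=
  if h : m = 0 then ∅ else (hB m h).1.choose

noncomputable def sbC (hB : IsSemiBasis B) (m : M) : M → ℝ≥0 :=
  if h : m = 0 then 0 else
    fun b => if b ∈ (hB m h).1.choose then (hB m h).1.choose_spec.choose b else 0

lemma sbT_zero (hB : IsSemiBasis B) : sbT hB (0 : M) = ∅ := by simp [sbT]

lemma sbC_zero (hB : IsSemiBasis B) : sbC hB (0 : M) = 0 := by simp [sbC]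

lemma sb_spec (hB : IsSemiBasis B) {m : M} (h : m ≠ 0) :
    (sbT hB m).Nonempty ∧ ↑(sbT hB m) ⊆ B ∧ (∀ b ∈ sbT hB m, 0 < sbC hB m b) ∧
      m = ∑ b ∈ sbT hB m, sbC hB m b • b ∧ ∀ b ∉ sbT hB m, sbC hB m b = 0 := by
  have hT : sbT hB m = (hB m h).1.choose := by rw [sbT, dif_neg h]
  have hC : sbC hB m = fun b =>
      if b ∈ (hB m h).1.choose then (hB m h).1.choose_spec.choose b else 0 := by
    rw [sbC, dif_neg h]
  obtain ⟨hne, hsub, hpos, heq⟩ := (hB m h).1.choose_spec.choose_spec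
  refine ⟨hT ▸ hne, hT ▸ hsub, ?_, ?_, ?_⟩
  · intro b hb; rw [hT] at hb; simp only [hC]; rw [if_pos hb]; exact hpos b hb
  · rw [hT]
    exact heq.trans (Finset.sum_congr rfl fun b hb => by
      simp only [hC]; rw [if_pos hb])
  · intro b hb; rw [hT] at hb; simp only [hC]; rw [if_neg hb]

lemma sb_unique (hB : IsSemiBasis B) {m : M} (h : m ≠ 0) (t : Finset M) (c : M → ℝ≥0)
    (hne : t.Nonempty) (hsub : ↑t ⊆ B) (hpos : ∀ b ∈ t, 0 < c b)
    (heq : m = ∑ b ∈ t, c b • b) (hz : ∀ b ∉ t, c b = 0) :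
    sbT hB m = t ∧ sbC hB m = c := by
  obtain ⟨hne', hsub', hpos', heq', hz'⟩ := sb_spec hB h
  obtain ⟨hts, hcs⟩ := (hB m h).2 (sbT hB m) t (sbC hB m) c hne' hsub' hpos' heq'
    hne hsub hpos heq
  refine ⟨hts, funext fun b => ?_⟩
  by_cases hb : b ∈ sbT hB m
  · exact hcs b hb
  · rw [hz' b hb, hz b (hts ▸ hb)]

lemma sb_add_eq_zero (hB : IsSemiBasis B) {u v : M} (huv : u + v = 0) : u = 0 := by
  by_contra hu
  have hv : v ≠ 0 := by rintro rfl; exact hu (by simpa using huv)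
  obtain ⟨htne, htsub, htpos, hteq, htz⟩ := sb_spec hB hu
  obtain ⟨hsne, hssub, hspos, hseq, hsz⟩ := sb_spec hB hv
  set t := sbT hB u; set c := sbC hB u; set t' := sbT hB v; set c' := sbC hB v
  -- u = u + (u + v) = ∑_{t ∪ t'} (c b + c b + c' b) • b
  have hsum : ∀ (f : M → ℝ≥0), (∀ b ∉ t, f b = 0) →
      ∑ b ∈ t ∪ t', f b • b = ∑ b ∈ t, f b • b := fun f hf =>
    (Finset.sum_subset Finset.subset_union_left (fun b _ hb => by rw [hf b hb, zero_smul])).symm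
  have hsum' : ∀ (f : M → ℝ≥0), (∀ b ∉ t', f b = 0) →
      ∑ b ∈ t ∪ t', f b • b = ∑ b ∈ t', f b • b := fun f hf =>
    (Finset.sum_subset Finset.subset_union_right (fun b _ hb => by rw [hf b hb, zero_smul])).symm
  have key : u = ∑ b ∈ t ∪ t', (c b + c b + c' b) • b := by
    have : ∑ b ∈ t ∪ t', (c b + c b + c' b) • b
        = (∑ b ∈ t ∪ t', c b • b) + (∑ b ∈ t ∪ t', c b • b) + ∑ b ∈ t ∪ t', c' b • b := by
      simp [add_smul, Finset.sum_add_distrib]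
    rw [this, hsum c htz, hsum' c' hsz, ← hteq, ← hseq, add_assoc, huv, add_zero]
  have hposU : ∀ b ∈ t ∪ t', 0 < c b + c b + c' b := by
    intro b hb
    rcases Finset.mem_union.mp hb with hb | hb
    · have := htpos b hb; positivity
    · have := hspos b hb; positivity
  obtain ⟨hts, hcs⟩ := (hB u hu).2 t (t ∪ t') c (fun b => c b + c b + c' b)
    htne htsub htpos hteq (htne.mono Finset.subset_union_left)
    (by rw [Finset.coe_union]; exact Set.union_subset htsub hssub) hposU key
  obtain ⟨b₀, hb₀⟩ := htne
  have := hcs b₀ hb₀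
  have hzero : c b₀ + c' b₀ = 0 := by
    have h2 : c b₀ = c b₀ + (c b₀ + c' b₀) := by rw [← add_assoc]; exact this
    exact (left_eq_add.mp h2)
  simp only [add_eq_zero] at hzero
  exact absurd hzero.1.symm (ne_of_lt (htpos b₀ hb₀))

lemma sbC_add (hB : IsSemiBasis B) (u v : M) :
    sbC hB (u + v) = fun b => sbC hB u b + sbC hB v b := by
  by_cases hu : u = 0
  · subst hu; simp [sbC_zero]
  by_cases hv : v = 0
  · subst hv; simp [sbC_zero]
  have huv : u + v ≠ 0 := fun h => hu (sb_add_eq_zero hB h)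
  obtain ⟨htne, htsub, htpos, hteq, htz⟩ := sb_spec hB hu
  obtain ⟨hsne, hssub, hspos, hseq, hsz⟩ := sb_spec hB hv
  set t := sbT hB u; set c := sbC hB u; set t' := sbT hB v; set c' := sbC hB v
  have hsum : ∑ b ∈ t ∪ t', c b • b = ∑ b ∈ t, c b • b :=
    (Finset.sum_subset Finset.subset_union_left (fun b _ hb => by rw [htz b hb, zero_smul])).symm
  have hsum' : ∑ b ∈ t ∪ t', c' b • b = ∑ b ∈ t', c' b • b :=
    (Finset.sum_subset Finset.subset_union_right (fun b _ hb => by rw [hsz b hb, zero_smul])).symm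
  have key : u + v = ∑ b ∈ t ∪ t', (c b + c' b) • b := by
    have : ∑ b ∈ t ∪ t', (c b + c' b) • b
        = (∑ b ∈ t ∪ t', c b • b) + ∑ b ∈ t ∪ t', c' b • b := by
      simp [add_smul, Finset.sum_add_distrib]
    rw [this, hsum, hsum', ← hteq, ← hseq]
  exact (sb_unique hB huv (t ∪ t') (fun b => c b + c' b)
    (htne.mono Finset.subset_union_left)
    (by rw [Finset.coe_union]; exact Set.union_subset htsub hssub)
    (fun b hb => by
      rcases Finset.mem_union.mp hb with hb | hb
      · have := htpos b hb; positivity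
      · have := hspos b hb; positivity)
    key
    (fun b hb => by
      rw [Finset.mem_union, not_or] at hb
      show c b + c' b = 0
      rw [htz b hb.1, hsz b hb.2, add_zero])).2

lemma sbC_inj (hB : IsSemiBasis B) {u v : M} (h : sbC hB u = sbC hB v) : u = v := by
  by_cases hu : u = 0
  · subst hu
    by_contra hv0
    have hv : v ≠ 0 := fun h' => hv0 h'.symm
    obtain ⟨⟨b₀, hb₀⟩, _, hpos, _, _⟩ := sb_spec hB hv
    have := hpos b₀ hb₀
    rw [← h, sbC_zero] at this
    exact lt_irrefl 0 this
  by_cases hv : v = 0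
  · subst hv
    obtain ⟨⟨b₀, hb₀⟩, _, hpos, _, _⟩ := sb_spec hB hu
    have := hpos b₀ hb₀
    rw [h, sbC_zero] at this
    exact absurd this (lt_irrefl 0)
  obtain ⟨_, _, htpos, hteq, htz⟩ := sb_spec hB hu
  obtain ⟨_, _, hspos, hseq, hsz⟩ := sb_spec hB hv
  have hT : sbT hB u = sbT hB v := by
    ext b
    constructor
    · intro hb
      by_contra hb'
      have := htpos b hb
      rw [h, hsz b hb'] at this
      exact lt_irrefl 0 this
    · intro hb
      by_contra hb'
      have := hspos b hb
      rw [← h, htz b hb'] at this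
      exact lt_irrefl 0 this
  rw [hteq, hseq, hT]
  exact Finset.sum_congr rfl fun b _ => by rw [h]

end Aux

/-- Every semi-free complete semi-vector space is regular: the cancellation law holds. -/
theorem semiFree_isRegular {M : Type*} [AddCommMonoid M] [Module ℝ≥0 M] {B : Set M}
    (hB : IsSemiBasis B) : ∀ u v w : M, u + w = v + w → u = v := by
  intro u v w h
  apply sbC_inj hB
  have h1 := sbC_add hB u w
  have h2 := sbC_add hB v w
  rw [h] at h1
  rw [h2] at h1
  funext b
  have := congrFun h1 b
  exact (add_right_cancel this).symm
end

section
/- Let M be an ℝ≥0-module admitting a semi-basis and let W be a nontrivial real vector space. If u, ū ∈ M satisfy f(u) = f(ū) for every semi-linear map f : M → W, then u = ū. -/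
open scoped NNReal

namespace SemiBasisAux

variable {M : Type*} [AddCommMonoid M] [Module ℝ≥0 M] {B : Set M}

/-- The chosen support of `m`. -/
noncomputable def repT (hB : IsSemiBasis B) (m : M) : Finset M := by
  classical exact if h : m = 0 then ∅ else (hB m h).1.choose

/-- The chosen coefficients of `m`, extended by zero off the support. -/
noncomputable def repC (hB : IsSemiBasis B) (m : M) : M → ℝ≥0 := by
  classical exact if h : m = 0 then 0 else fun b =>
    if b ∈ (hB m h).1.choose then (hB m h).1.choose_spec.choose b else 0

lemma repC_zero (hB : IsSemiBasis B) : repC hB (0 : M) = 0 := by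
  simp [repC]

lemma rep_spec (hB : IsSemiBasis B) {m : M} (hm : m ≠ 0) :
    (repT hB m).Nonempty ∧ ↑(repT hB m) ⊆ B ∧
    (∀ b ∈ repT hB m, 0 < repC hB m b) ∧ (m = ∑ b ∈ repT hB m, repC hB m b • b) ∧
    (∀ b ∉ repT hB m, repC hB m b = 0) := by
  classical
  have hs := (hB m hm).1.choose_spec.choose_spec
  simp only [repT, repC, dif_neg hm]
  refine ⟨hs.1, hs.2.1, ?_, ?_, ?_⟩
  · intro b hb; rw [if_pos hb]; exact hs.2.2.1 b hb
  · exact hs.2.2.2.trans (Finset.sum_congr rfl fun b hb => by rw [if_pos hb])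
  · intro b hb; rw [if_neg hb]

variable [DecidableEq M]

lemma rep_unique (hB : IsSemiBasis B) {m : M} (hm : m ≠ 0) {t : Finset M} {c : M → ℝ≥0}
    (ht : t.Nonempty) (htB : ↑t ⊆ B) (hc : ∀ b ∈ t, 0 < c b)
    (hsum : m = ∑ b ∈ t, c b • b) :
    repT hB m = t ∧ ∀ b, repC hB m b = if b ∈ t then c b else 0 := by
  obtain ⟨h1, h2, h3, h4, h5⟩ := rep_spec hB hm
  obtain ⟨hteq, hceq⟩ := (hB m hm).2 (repT hB m) t (repC hB m) c h1 h2 h3 h4 ht htB hc hsum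
  refine ⟨hteq, fun b => ?_⟩
  by_cases hb : b ∈ t
  · rw [if_pos hb]; exact hceq b (hteq ▸ hb)
  · rw [if_neg hb]; exact h5 b (hteq ▸ hb)

lemma sum_union_ext {t s : Finset M} (c d : M → ℝ≥0)
    (hc : ∀ b ∉ t, c b = 0) (hd : ∀ b ∉ s, d b = 0) :
    (∑ b ∈ t, c b • b) + (∑ b ∈ s, d b • b) = ∑ b ∈ t ∪ s, (c b + d b) • b := by
  have h1 : ∑ b ∈ t, c b • b = ∑ b ∈ t ∪ s, c b • b := by
    apply Finset.sum_subset Finset.subset_union_left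
    intro b _ hb
    rw [hc b hb, zero_smul]
  have h2 : ∑ b ∈ s, d b • b = ∑ b ∈ t ∪ s, d b • b := by
    apply Finset.sum_subset Finset.subset_union_right
    intro b _ hb
    rw [hd b hb, zero_smul]
  rw [h1, h2, ← Finset.sum_add_distrib]
  exact Finset.sum_congr rfl fun b _ => (add_smul _ _ _).symm

/-- `0` admits no positive representation, as long as `M` has some nonzero element. -/
lemma not_zero_rep (hB : IsSemiBasis B) {x : M} (hx : x ≠ 0) {s : Finset M} {d : M → ℝ≥0}
    (hs : s.Nonempty) (hsB : ↑s ⊆ B) (hd : ∀ b ∈ s, 0 < d b)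
    (hds : ∀ b ∉ s, d b = 0)
    (h0 : (0 : M) = ∑ b ∈ s, d b • b) : False := by
  obtain ⟨h1, h2, h3, h4, h5⟩ := rep_spec hB hx
  have hsum : x = ∑ b ∈ repT hB x ∪ s, (repC hB x b + d b) • b := by
    rw [← sum_union_ext _ _ h5 hds, ← h4, ← h0, add_zero]
  have hpos : ∀ b ∈ repT hB x ∪ s, 0 < repC hB x b + d b := by
    intro b hb
    rcases Finset.mem_union.mp hb with hb | hb
    · exact lt_of_lt_of_le (h3 b hb) le_self_add
    · exact lt_of_lt_of_le (hd b hb) le_add_self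
  obtain ⟨hteq, hceq⟩ := (hB x hx).2 (repT hB x) (repT hB x ∪ s) (repC hB x)
    (fun b => repC hB x b + d b) h1 h2 h3 h4
    (h1.mono Finset.subset_union_left)
    (by rw [Finset.coe_union]; exact Set.union_subset h2 hsB) hpos hsum
  obtain ⟨b₀, hb₀⟩ := hs
  have hb₀t : b₀ ∈ repT hB x := hteq ▸ Finset.mem_union_right _ hb₀
  have := hceq b₀ hb₀t
  have hd0 : d b₀ = 0 := left_eq_add.mp this
  exact absurd hd0 (hd b₀ hb₀).ne'

lemma repC_add (hB : IsSemiBasis B) (x y : M) (b : M) :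
    repC hB (x + y) b = repC hB x b + repC hB y b := by
  by_cases hx : x = 0
  · simp [hx, repC_zero]
  by_cases hy : y = 0
  · simp [hy, repC_zero]
  obtain ⟨hx1, hx2, hx3, hx4, hx5⟩ := rep_spec hB hx
  obtain ⟨hy1, hy2, hy3, hy4, hy5⟩ := rep_spec hB hy
  have hsum : x + y = ∑ b ∈ repT hB x ∪ repT hB y, (repC hB x b + repC hB y b) • b := by
    rw [← sum_union_ext _ _ hx5 hy5, ← hx4, ← hy4]
  have hpos : ∀ b ∈ repT hB x ∪ repT hB y, 0 < repC hB x b + repC hB y b := by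
    intro b hb
    rcases Finset.mem_union.mp hb with hb | hb
    · exact lt_of_lt_of_le (hx3 b hb) le_self_add
    · exact lt_of_lt_of_le (hy3 b hb) le_add_self
  by_cases hxy : x + y = 0
  · exact absurd (hxy ▸ hsum)
      (fun hh => not_zero_rep hB hx (hx1.mono Finset.subset_union_left)
        (by rw [Finset.coe_union]; exact Set.union_subset hx2 hy2) hpos
        (fun b hb => by
          rw [hx5 b (fun hbt => hb (Finset.mem_union_left _ hbt)),
            hy5 b (fun hbt => hb (Finset.mem_union_right _ hbt)), add_zero]) hh)
  obtain ⟨-, hcoef⟩ := rep_unique hB hxy (hx1.mono Finset.subset_union_left)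
    (by rw [Finset.coe_union]; exact Set.union_subset hx2 hy2) hpos hsum
  rw [hcoef b]
  by_cases hb : b ∈ repT hB x ∪ repT hB y
  · rw [if_pos hb]
  · rw [if_neg hb,
      hx5 b (fun hbt => hb (Finset.mem_union_left _ hbt)),
      hy5 b (fun hbt => hb (Finset.mem_union_right _ hbt)), add_zero]

lemma repC_smul (hB : IsSemiBasis B) {r : ℝ≥0} (hr : 0 < r) (x : M) (b : M) :
    repC hB (r • x) b = r * repC hB x b := by
  by_cases hx : x = 0
  · simp [hx, repC_zero]
  obtain ⟨h1, h2, h3, h4, h5⟩ := rep_spec hB hx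
  have hrx : r • x ≠ 0 := by
    intro hrx
    apply hx
    have : r⁻¹ • (r • x) = x := by
      rw [smul_smul, inv_mul_cancel₀ hr.ne', one_smul]
    rw [← this, hrx, smul_zero]
  have hsum : r • x = ∑ b ∈ repT hB x, (r * repC hB x b) • b := by
    nth_rewrite 1 [h4]
    rw [Finset.smul_sum]
    exact Finset.sum_congr rfl fun b _ => (smul_smul _ _ _)
  obtain ⟨-, hcoef⟩ := rep_unique hB hrx h1 h2
    (fun b hb => mul_pos hr (h3 b hb)) hsum
  rw [hcoef b]
  by_cases hb : b ∈ repT hB x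
  · rw [if_pos hb]
  · rw [if_neg hb, h5 b hb, mul_zero]

end SemiBasisAux

/-- Semi-linear maps into a nontrivial real vector space separate points of a semi-free
complete semi-vector space: if `f u = f u'` for every semi-linear `f : M → W`,
then `u = u'`. -/
theorem semiLinear_separating {M W : Type*} [AddCommMonoid M] [Module ℝ≥0 M]
    [AddCommGroup W] [Module ℝ W] [Nontrivial W] {B : Set M} (hB : IsSemiBasis B)
    (u u' : M)
    (h : ∀ f : M → W, (∀ x y : M, f (x + y) = f x + f y) →
      (∀ r : ℝ≥0, 0 < r → ∀ x : M, f (r • x) = (r : ℝ) • f x) → f u = f u') :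
    u = u' := by
  classical
  open SemiBasisAux in
  obtain ⟨w, hw⟩ := exists_ne (0 : W)
  have key : ∀ b : M, repC hB u b = repC hB u' b := by
    intro b
    have hf := h (fun m => ((repC hB m b : ℝ)) • w)
      (fun x y => by
        simp only [repC_add hB x y b, NNReal.coe_add, add_smul])
      (fun r hr x => by
        simp only [repC_smul hB hr x b, NNReal.coe_mul, mul_smul])
    have : ((repC hB u b : ℝ)) = ((repC hB u' b : ℝ)) :=
      smul_left_injective ℝ hw hf
    exact_mod_cast this
  by_cases hu : u = 0
  · by_cases hu' : u' = 0
    · rw [hu, hu']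
    · obtain ⟨⟨b₀, hb₀⟩, -, h3, -, -⟩ := rep_spec hB hu'
      have : repC hB u' b₀ = 0 := by
        rw [← key b₀, hu, repC_zero]; rfl
      exact absurd this (h3 b₀ hb₀).ne'
  · by_cases hu' : u' = 0
    · obtain ⟨⟨b₀, hb₀⟩, -, h3, -, -⟩ := rep_spec hB hu
      have : repC hB u b₀ = 0 := by
        rw [key b₀, hu', repC_zero]; rfl
      exact absurd this (h3 b₀ hb₀).ne'
    · obtain ⟨h1, h2, h3, h4, h5⟩ := rep_spec hB hu
      obtain ⟨h1', h2', h3', h4', h5'⟩ := rep_spec hB hu'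
      have hteq : repT hB u = repT hB u' := by
        ext b
        constructor
        · intro hb
          by_contra hb'
          exact absurd (key b ▸ h5' b hb') (h3 b hb).ne'
        · intro hb
          by_contra hb'
          exact absurd ((key b).symm ▸ h5 b hb') (h3' b hb).ne'
      rw [h4, h4', hteq]
      exact Finset.sum_congr rfl fun b _ => by rw [key b]
end

section
/- For every real vector space V and every semi-vector space U over ℝ⁺, a sesqui-tensor product (T, t) of V and U exists, and T is linearly generated over ℝ by the image of t. Moreover it is unique up to a distinguished isomorphism: if (T, t) and (T', t') are two sesqui-tensor products of V and U, then there is a unique ℝ-linear isomorphism Φ : T → T' with Φ(t(v,u)) = t'(v,u) for all v ∈ V and u ∈ U. -/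
universe u v w w' w₁ w₂

/-- A semi-vector space structure over `ℝ⁺` on an additive commutative semigroup `U`:
a scalar multiplication `smul : ℝ → U → U` satisfying the semi-vector space axioms
for positive scalars. -/
def IsSemiVectorSMul {U : Type v} [AddCommSemigroup U] (smul : ℝ → U → U) : Prop :=
  (∀ r s : ℝ, 0 < r → 0 < s → ∀ u : U, smul (r * s) u = smul r (smul s u)) ∧
  (∀ u : U, smul 1 u = u) ∧
  (∀ r : ℝ, 0 < r → ∀ u v : U, smul r (u + v) = smul r u + smul r v) ∧
  (∀ r s : ℝ, 0 < r → 0 < s → ∀ u : U, smul (r + s) u = smul r u + smul s u)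

/-- A map `t : V × U → T` from a real vector space times a semi-vector space into a real
vector space is *sesqui-bilinear* if it is `ℝ`-linear in the first variable and
semi-linear (additive and positively homogeneous) in the second variable. -/
def IsSesquiBilinear {V : Type u} {U : Type v} {T : Type w} [AddCommGroup V] [Module ℝ V]
    [AddCommSemigroup U] (smul : ℝ → U → U) [AddCommGroup T] [Module ℝ T]
    (t : V → U → T) : Prop :=
  (∀ (v v' : V) (u : U), t (v + v') u = t v u + t v' u) ∧
  (∀ (a : ℝ) (v : V) (u : U), t (a • v) u = a • t v u) ∧
  (∀ (v : V) (u u' : U), t v (u + u') = t v u + t v u') ∧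
  (∀ r : ℝ, 0 < r → ∀ (v : V) (u : U), t v (smul r u) = r • t v u)

/-- `(T, t)` is a sesqui-tensor product of the real vector space `V` and the semi-vector
space `U` if `t` is sesqui-bilinear and every sesqui-bilinear map `f : V × U → W` into a
real vector space `W` factors through `t` via a unique `ℝ`-linear map `T → W`. -/
def IsSesquiTensorProduct {V : Type u} {U : Type v} {T : Type w} [AddCommGroup V]
    [Module ℝ V] [AddCommSemigroup U] (smul : ℝ → U → U) [AddCommGroup T] [Module ℝ T]
    (t : V → U → T) : Prop :=
  IsSesquiBilinear smul t ∧
  ∀ (W : Type w') [AddCommGroup W] [Module ℝ W] (f : V → U → W),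
    IsSesquiBilinear smul f → ∃! g : T →ₗ[ℝ] W, ∀ (v : V) (u : U), g (t v u) = f v u

/-- A bundled candidate sesqui-tensor product of `V` and `U`. -/
structure SesquiTensorCandidate (V : Type u) (U : Type v) [AddCommGroup V] [Module ℝ V]
    [AddCommSemigroup U] (smul : ℝ → U → U) where
  T : Type w
  [instAdd : AddCommGroup T]
  [instMod : Module ℝ T]
  t : V → U → T

attribute [instance] SesquiTensorCandidate.instAdd SesquiTensorCandidate.instMod


section Aux

variable {V : Type u} {U : Type v} [AddCommGroup V] [Module ℝ V]
  [AddCommSemigroup U] (smul : ℝ → U → U)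

/-- Relations defining the sesqui-tensor product. -/
noncomputable def sesquiN : Submodule ℝ ((V × U) →₀ ℝ) :=
  Submodule.span ℝ
    {x | (∃ v v' u₀, x = Finsupp.single (v + v', u₀) 1 - Finsupp.single (v, u₀) 1 -
            Finsupp.single (v', u₀) 1) ∨
         (∃ (a : ℝ) (v : V) (u₀ : U), x = Finsupp.single (a • v, u₀) 1 -
            a • Finsupp.single (v, u₀) 1) ∨
         (∃ v u₀ u₁, x = Finsupp.single (v, u₀ + u₁) 1 - Finsupp.single (v, u₀) 1 -
            Finsupp.single (v, u₁) 1) ∨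
         (∃ r : ℝ, 0 < r ∧ ∃ v u₀, x = Finsupp.single (v, smul r u₀) 1 -
            r • Finsupp.single (v, u₀) 1)}

/-- The underlying space of the constructed sesqui-tensor product. -/
abbrev sesquiT : Type (max u v) := ((V × U) →₀ ℝ) ⧸ sesquiN (V := V) (U := U) smul

/-- The canonical map. -/
noncomputable def sesquit (v : V) (u : U) : sesquiT (V := V) (U := U) smul :=
  (sesquiN smul).mkQ (Finsupp.single (v, u) 1)

theorem sesquit_bilinear : IsSesquiBilinear smul (sesquit (V := V) (U := U) smul) := by
  refine ⟨fun v v' u => ?_, fun a v u => ?_, fun v u u' => ?_, fun r hr v u => ?_⟩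
  · rw [sesquit, sesquit, sesquit, ← map_add]
    simp only [Submodule.mkQ_apply]
    rw [Submodule.Quotient.eq]
    exact Submodule.subset_span (Or.inl ⟨v, v', u, by abel⟩)
  · rw [sesquit, sesquit, ← map_smul]
    simp only [Submodule.mkQ_apply]
    rw [Submodule.Quotient.eq]
    exact Submodule.subset_span (Or.inr (Or.inl ⟨a, v, u, by abel⟩))
  · rw [sesquit, sesquit, sesquit, ← map_add]
    simp only [Submodule.mkQ_apply]
    rw [Submodule.Quotient.eq]
    exact Submodule.subset_span (Or.inr (Or.inr (Or.inl ⟨v, u, u', by abel⟩)))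
  · rw [sesquit, sesquit, ← map_smul]
    simp only [Submodule.mkQ_apply]
    rw [Submodule.Quotient.eq]
    exact Submodule.subset_span (Or.inr (Or.inr (Or.inr ⟨r, hr, v, u, by abel⟩)))

theorem sesquit_span_top :
    Submodule.span ℝ
      {x : sesquiT (V := V) (U := U) smul | ∃ v u, x = sesquit smul v u} = ⊤ := by
  rw [eq_top_iff]
  rintro x -
  obtain ⟨y, rfl⟩ := (sesquiN (V := V) (U := U) smul).mkQ_surjective x
  induction y using Finsupp.induction_linear with
  | zero => simp
  | add f g hf hg => rw [map_add]; exact Submodule.add_mem _ hf hg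
  | single a b =>
    have : Finsupp.single a b = b • Finsupp.single a (1 : ℝ) := by
      rw [Finsupp.smul_single, smul_eq_mul, mul_one]
    rw [this, map_smul]
    exact Submodule.smul_mem _ _ (Submodule.subset_span ⟨a.1, a.2, rfl⟩)

theorem sesquit_isSTP :
    IsSesquiTensorProduct.{u, v, max u v, w'} smul (sesquit (V := V) (U := U) smul) := by
  refine ⟨sesquit_bilinear smul, fun W _ _ f hf => ?_⟩
  set L : ((V × U) →₀ ℝ) →ₗ[ℝ] W :=
    Finsupp.linearCombination ℝ (fun p : V × U => f p.1 p.2) with hL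
  have hker : sesquiN (V := V) (U := U) smul ≤ LinearMap.ker L := by
    rw [sesquiN, Submodule.span_le]
    rintro x (⟨v, v', u₀, rfl⟩ | ⟨a, v, u₀, rfl⟩ | ⟨v, u₀, u₁, rfl⟩ | ⟨r, hr, v, u₀, rfl⟩) <;>
      simp only [SetLike.mem_coe, LinearMap.mem_ker, map_sub, map_smul, hL,
        Finsupp.linearCombination_single, one_smul]
    · rw [hf.1]; abel
    · rw [hf.2.1]; abel
    · rw [hf.2.2.1]; abel
    · rw [hf.2.2.2 r hr]; abel
  refine ⟨(sesquiN smul).liftQ L hker, fun v u => ?_, fun g hg => ?_⟩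
  · show ((sesquiN smul).liftQ L hker) ((sesquiN smul).mkQ (Finsupp.single (v, u) 1)) = f v u
    simp only [Submodule.mkQ_apply, Submodule.liftQ_apply, hL]
    simp [Finsupp.linearCombination_single]
  · apply LinearMap.ext_on (sesquit_span_top smul)
    rintro x ⟨v, u, rfl⟩
    rw [hg v u]
    show f v u = ((sesquiN smul).liftQ L hker) ((sesquiN smul).mkQ (Finsupp.single (v, u) 1))
    simp only [Submodule.mkQ_apply, Submodule.liftQ_apply, hL]
    simp [Finsupp.linearCombination_single]

end Aux

/-- Any sesqui-tensor product is spanned by the image of the canonical map. -/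
theorem stp_span_top {V : Type u} {U : Type v} {T : Type w} [AddCommGroup V] [Module ℝ V]
    [AddCommSemigroup U] {smul : ℝ → U → U} [AddCommGroup T] [Module ℝ T]
    {t : V → U → T} (h : IsSesquiTensorProduct.{u, v, w, w'} smul t) :
    Submodule.span ℝ {x : T | ∃ v u, x = t v u} = ⊤ := by
  by_contra hne
  set S : Submodule ℝ T := Submodule.span ℝ {x : T | ∃ v u, x = t v u} with hS
  obtain ⟨x, hx⟩ : ∃ x : T, x ∉ S := by
    by_contra h'
    push_neg at h'
    exact hne (eq_top_iff.2 fun y _ => h' y)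
  have hx0 : S.mkQ x ≠ 0 := by
    simpa [Submodule.mkQ_apply, Submodule.Quotient.mk_eq_zero] using hx
  have : ¬ ∀ φ : Module.Dual ℝ (T ⧸ S), φ (S.mkQ x) = 0 := by
    rw [Module.forall_dual_apply_eq_zero_iff]
    exact hx0
  push_neg at this
  obtain ⟨φ, hφ⟩ := this
  have hzero : IsSesquiBilinear smul (fun (_ : V) (_ : U) => (0 : ULift.{w'} ℝ)) := by
    exact ⟨fun _ _ _ => by simp, fun _ _ _ => by simp, fun _ _ _ => by simp,
      fun _ _ _ _ => by simp⟩
  obtain ⟨g, -, hg⟩ := h.2 (ULift.{w'} ℝ) (fun _ _ => 0) hzero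
  set F : T →ₗ[ℝ] ULift.{w'} ℝ :=
    (ULift.moduleEquiv.symm.toLinearMap.comp φ).comp S.mkQ with hF
  have hF0 : ∀ v u, F (t v u) = 0 := by
    intro v u
    have hmem : t v u ∈ S := by
      rw [hS]
      exact Submodule.subset_span ⟨v, u, rfl⟩
    have : S.mkQ (t v u) = 0 := by
      simpa [Submodule.mkQ_apply, Submodule.Quotient.mk_eq_zero] using hmem
    simp only [hF, LinearMap.comp_apply, this, map_zero]
  have h1 := hg F hF0
  have h2 := hg 0 (fun _ _ => rfl)
  have hFx : F x = 0 := by rw [h1, ← h2]; rfl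
  apply hφ
  have := congrArg ULift.down (by simpa [hF] using hFx)
  simpa using this


/-- Existence and uniqueness of the sesqui-tensor product of a real vector space `V`
and a semi-vector space `U` over `ℝ⁺`: a sesqui-tensor product exists and is linearly
generated by the image of the canonical map, and any two sesqui-tensor products are
related by a unique `ℝ`-linear isomorphism compatible with the canonical maps. -/
theorem sesquiTensorProduct_exists_unique {V : Type u} {U : Type v} [AddCommGroup V]
    [Module ℝ V] [AddCommSemigroup U] (smul : ℝ → U → U)
    (hU : IsSemiVectorSMul smul) :
    (∃ P : SesquiTensorCandidate.{u, v, max u v} V U smul,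
        IsSesquiTensorProduct.{u, v, max u v, w'} smul P.t ∧
        Submodule.span ℝ {x : P.T | ∃ (v : V) (u : U), x = P.t v u} = ⊤) ∧
    (∀ (P : SesquiTensorCandidate.{u, v, w₁} V U smul)
        (Q : SesquiTensorCandidate.{u, v, w₂} V U smul),
        IsSesquiTensorProduct.{u, v, w₁, w₂} smul P.t →
        IsSesquiTensorProduct.{u, v, w₂, w₁} smul Q.t →
        ∃! Φ : P.T ≃ₗ[ℝ] Q.T, ∀ (v : V) (u : U), Φ (P.t v u) = Q.t v u) := by
  constructor
  · refine ⟨⟨sesquiT (V := V) (U := U) smul, sesquit smul⟩, sesquit_isSTP smul, ?_⟩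
    exact sesquit_span_top smul
  · intro P Q hP hQ
    obtain ⟨g, hg, hgu⟩ := hP.2 Q.T Q.t hQ.1
    obtain ⟨h, hh, hhu⟩ := hQ.2 P.T P.t hP.1
    have hgh : g.comp h = LinearMap.id := by
      apply LinearMap.ext_on (stp_span_top hQ)
      rintro x ⟨v, u, rfl⟩
      simp [hh, hg]
    have hhg : h.comp g = LinearMap.id := by
      apply LinearMap.ext_on (stp_span_top hP)
      rintro x ⟨v, u, rfl⟩
      simp [hg, hh]
    refine ⟨LinearEquiv.ofLinear g h hgh hhg, hg, fun Φ hΦ => ?_⟩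
    have : (Φ : P.T →ₗ[ℝ] Q.T) = g := hgu _ hΦ
    ext x
    exact DFunLike.congr_fun this x
end

section
/- Let B be a type and let ι : (B →₀ ℝ≥0) → (B →₀ ℝ) be the canonical embedding of finitely supported ℝ≥0-valued functions into finitely supported real-valued functions, induced by the coercion ℝ≥0 → ℝ. Then for every real vector space W and every map f : (B →₀ ℝ≥0) → W that is additive (f(x + y) = f(x) + f(y)) and satisfies f(r • x) = r • f(x) for all real r > 0, there exists a unique ℝ-linear map f̄ : (B →₀ ℝ) → W with f̄(ι(x)) = f(x) for all x. -/
open scoped NNReal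

/-- Universal vector extension of the semi-free complete semi-vector space `B →₀ ℝ≥0`:
every semi-linear map `f` from `B →₀ ℝ≥0` into a real vector space `W` factors uniquely
through the canonical embedding `ι : (B →₀ ℝ≥0) → (B →₀ ℝ)` (induced by the coercion
`ℝ≥0 → ℝ`) via an `ℝ`-linear map `(B →₀ ℝ) → W`. -/
theorem finsupp_universal_vector_extension {B W : Type*} [AddCommGroup W] [Module ℝ W]
    (f : (B →₀ ℝ≥0) → W)
    (hadd : ∀ x y : B →₀ ℝ≥0, f (x + y) = f x + f y)
    (hsmul : ∀ r : ℝ, 0 < r → ∀ x : B →₀ ℝ≥0, f (r.toNNReal • x) = r • f x) :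
    ∃! g : (B →₀ ℝ) →ₗ[ℝ] W,
      ∀ x : B →₀ ℝ≥0, g (Finsupp.mapRange NNReal.toReal NNReal.coe_zero x) = f x := by
  have hf0 : f 0 = 0 := by
    have := hadd 0 0
    simpa using this.symm
  set g : (B →₀ ℝ) →ₗ[ℝ] W :=
    Finsupp.lsum ℝ (fun b => LinearMap.toSpanSingleton ℝ W (f (Finsupp.single b 1))) with hg
  have hgsingle : ∀ (b : B) (r : ℝ), g (Finsupp.single b r) = r • f (Finsupp.single b 1) := by
    intro b r
    simp [hg, LinearMap.toSpanSingleton_apply]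
  have hι : ∀ x : B →₀ ℝ≥0,
      g (Finsupp.mapRange NNReal.toReal NNReal.coe_zero x) = f x := by
    intro x
    induction x using Finsupp.induction with
    | zero => simpa using hf0.symm
    | single_add b r x hb hr ih =>
      rw [Finsupp.mapRange_add NNReal.coe_add, map_add, ih, hadd]
      congr 1
      rw [Finsupp.mapRange_single, hgsingle]
      have hr' : (0 : ℝ) < (r : ℝ) := by exact_mod_cast hr.bot_lt
      have := hsmul (r : ℝ) hr' (Finsupp.single b 1)
      rw [Real.toNNReal_coe] at this
      rw [← this, Finsupp.smul_single, smul_eq_mul, mul_one]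
  refine ⟨g, hι, ?_⟩
  intro g' hg'
  apply Finsupp.lhom_ext'
  intro b
  apply LinearMap.ext_ring
  have h1 : (Finsupp.mapRange NNReal.toReal NNReal.coe_zero (Finsupp.single b (1 : ℝ≥0)))
      = Finsupp.single b (1 : ℝ) := by simp
  have := hg' (Finsupp.single b 1)
  rw [h1] at this
  have h2 := hι (Finsupp.single b 1)
  rw [h1] at h2
  simp [this, h2]
end

section
/- Let U and V be positive spaces and q ∈ ℚ. (i) For every q-rational map f : U → V and every s ∈ ℝ>0, the map u ↦ s • f(u) is again q-rational. (ii) For any two q-rational maps f, g : U → V there is a unique s ∈ ℝ>0 with g(u) = s • f(u) for all u ∈ U. Hence the set Rat^q(U, V) of q-rational maps, equipped with the pointwise ℝ>0-action, is itself a positive space (the action is free and transitive). -/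
/-- A positive space: a nonempty type `U` with a free and transitive multiplicative
action of the positive reals, encoded by `act : ℝ → U → U` (only the values of `act`
at positive scalars are relevant). -/
def IsPositiveSpace {U : Type*} (act : ℝ → U → U) : Prop :=
  Nonempty U ∧
  (∀ u : U, act 1 u = u) ∧
  (∀ r s : ℝ, 0 < r → 0 < s → ∀ u : U, act r (act s u) = act (r * s) u) ∧
  (∀ u u' : U, ∃! r : ℝ, 0 < r ∧ act r u = u')

/-- A map `f` between positive spaces is `q`-rational if `f (r • u) = r ^ q • f u`
for all positive reals `r`, where `r ^ q` is the real rational power. -/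
def IsRatMap {U V : Type*} (act : ℝ → U → U) (act' : ℝ → V → V) (q : ℚ) (f : U → V) :
    Prop :=
  ∀ r : ℝ, 0 < r → ∀ u : U, f (act r u) = act' (r ^ (q : ℝ)) (f u)

/-- The set of `q`-rational maps between two positive spaces, with the pointwise action
of the positive reals, is itself a positive space: it is nonempty, stable under the
pointwise action, and the action on it is free and transitive. -/
theorem ratMaps_positiveSpace {U V : Type*} (actU : ℝ → U → U) (actV : ℝ → V → V)
    (hU : IsPositiveSpace actU) (hV : IsPositiveSpace actV) (q : ℚ) :
    (∃ f : U → V, IsRatMap actU actV q f) ∧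
    (∀ f : U → V, IsRatMap actU actV q f → ∀ s : ℝ, 0 < s →
      IsRatMap actU actV q fun u => actV s (f u)) ∧
    (∀ f g : U → V, IsRatMap actU actV q f → IsRatMap actU actV q g →
      ∃! s : ℝ, 0 < s ∧ ∀ u : U, g u = actV s (f u)) := by

  obtain ⟨⟨u₀⟩, h1U, hmU, htU⟩ := hU
  obtain ⟨⟨v₀⟩, h1V, hmV, htV⟩ := hV
  choose scal hscal huniq using fun u => (htU u₀ u).exists
  -- huniq : actU (scal u) u₀ = u, hscal : 0 < scal u
  refine ⟨?_, ?_, ?_⟩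
  · -- existence
    refine ⟨fun u => actV ((scal u) ^ (q:ℝ)) v₀, fun r hr u => ?_⟩
    have hkey : scal (actU r u) = r * scal u := by
      obtain ⟨s, hs, hsu⟩ := htU u₀ (actU r u)
      have h1 := hsu (scal (actU r u)) ⟨hscal _, huniq _⟩
      have h2 := hsu (r * scal u) ⟨mul_pos hr (hscal u), by
        rw [← hmU r (scal u) hr (hscal u), huniq]⟩
      rw [h1, h2]
    beta_reduce
    rw [hkey, Real.mul_rpow hr.le (hscal u).le,
      ← hmV _ _ (Real.rpow_pos_of_pos hr _) (Real.rpow_pos_of_pos (hscal u) _)]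
  · -- stability
    intro f hf s hs r hr u
    beta_reduce
    rw [hf r hr u, hmV _ _ hs (Real.rpow_pos_of_pos hr _),
      hmV _ _ (Real.rpow_pos_of_pos hr _) hs, mul_comm]
  · -- free and transitive
    intro f g hf hg
    obtain ⟨s, ⟨hs, hsfg⟩, hsu⟩ := htV (f u₀) (g u₀)
    refine ⟨s, ⟨hs, fun u => ?_⟩, fun t ⟨ht, htfg⟩ => hsu t ⟨ht, (htfg u₀).symm⟩⟩
    have hu : actU (scal u) u₀ = u := huniq u
    calc g u = g (actU (scal u) u₀) := by rw [hu]
      _ = actV ((scal u) ^ (q:ℝ)) (g u₀) := hg _ (hscal u) u₀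
      _ = actV ((scal u) ^ (q:ℝ)) (actV s (f u₀)) := by rw [hsfg]
      _ = actV s (actV ((scal u) ^ (q:ℝ)) (f u₀)) := by
          rw [hmV _ _ (Real.rpow_pos_of_pos (hscal u) _) hs,
            hmV _ _ hs (Real.rpow_pos_of_pos (hscal u) _), mul_comm]
      _ = actV s (f (actU (scal u) u₀)) := by rw [hf _ (hscal u) u₀]
      _ = actV s (f u) := by rw [hu]
end

section
/- Let U be a positive space and let U⋆ denote the set of 1-rational maps ω : U → ℝ>0, where ℝ>0 is regarded as a positive space under its own multiplication; U⋆ is a positive space under the pointwise action (s • ω)(u) = s·ω(u). Let p, q ∈ ℚ. Then every (p+q)-rational map h : U⋆ → ℝ>0 factors as a pointwise product h = f·g with f p-rational and g q-rational, and the factorization is unique up to reciprocal scaling: if also h = f'·g' with f' p-rational and g' q-rational, then there is s ∈ ℝ>0 with f' = s·f and g' = s⁻¹·g. (This realizes the canonical semi-linear isomorphism U^p ⊗̂ U^q ≅ U^{p+q} of rational powers of a positive space.) -/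
/-- An element of the semi-dual `U⋆` of a positive space `U`: a `1`-rational map
`ω : U → ℝ>0`, encoded as a real-valued map which is positive and `1`-rational. -/
def IsDual {U : Type*} (actU : ℝ → U → U) (ω : U → ℝ) : Prop :=
  (∀ u : U, 0 < ω u) ∧ ∀ r : ℝ, 0 < r → ∀ u : U, ω (actU r u) = r * ω u

/-- An element of the rational power `U^q = Rat^q (U⋆, ℝ>0)`: a map `h` on the
semi-dual `U⋆`, positive and `q`-rational with respect to the pointwise action of the
positive reals on `U⋆`. -/
def IsPow {U : Type*} (actU : ℝ → U → U) (q : ℚ) (h : (U → ℝ) → ℝ) : Prop :=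
  (∀ ω : U → ℝ, IsDual actU ω → 0 < h ω) ∧
  ∀ s : ℝ, 0 < s → ∀ ω : U → ℝ, IsDual actU ω →
    h (fun u => s * ω u) = s ^ (q : ℝ) * h ω

/-- The canonical isomorphism `U^p ⊗̂ U^q ≅ U^(p+q)` for a positive space `U`: every
`(p+q)`-rational map `h` on the semi-dual `U⋆` factors as a pointwise product of a
`p`-rational and a `q`-rational map, uniquely up to a reciprocal positive rescaling of
the two factors. -/
theorem pow_add_factorization {U : Type*} (actU : ℝ → U → U)
    (hU : IsPositiveSpace actU) (p q : ℚ) (h : (U → ℝ) → ℝ)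
    (hh : IsPow actU (p + q) h) :
    (∃ f g : (U → ℝ) → ℝ, IsPow actU p f ∧ IsPow actU q g ∧
      ∀ ω : U → ℝ, IsDual actU ω → h ω = f ω * g ω) ∧
    (∀ f g f' g' : (U → ℝ) → ℝ,
      IsPow actU p f → IsPow actU q g → IsPow actU p f' → IsPow actU q g' →
      (∀ ω : U → ℝ, IsDual actU ω → h ω = f ω * g ω) →
      (∀ ω : U → ℝ, IsDual actU ω → h ω = f' ω * g' ω) →
      ∃ s : ℝ, 0 < s ∧ (∀ ω : U → ℝ, IsDual actU ω → f' ω = s * f ω) ∧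
        ∀ ω : U → ℝ, IsDual actU ω → g' ω = s⁻¹ * g ω) := by
  obtain ⟨⟨u₀⟩, hone, hmul, hfree⟩ := hU
  set ω₀ : U → ℝ := fun u => (hfree u₀ u).choose with hω₀def
  have hω₀pos : ∀ u, 0 < ω₀ u := fun u => (hfree u₀ u).choose_spec.1.1
  have hω₀act : ∀ u, actU (ω₀ u) u₀ = u := fun u => (hfree u₀ u).choose_spec.1.2
  have hω₀uniq : ∀ u r, 0 < r → actU r u₀ = u → r = ω₀ u :=
    fun u r hr ha => (hfree u₀ u).choose_spec.2 r ⟨hr, ha⟩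
  have hω₀dual : IsDual actU ω₀ := by
    refine ⟨hω₀pos, fun r hr u => ?_⟩
    refine (hω₀uniq _ _ (mul_pos hr (hω₀pos u)) ?_).symm
    rw [← hmul r (ω₀ u) hr (hω₀pos u) u₀, hω₀act u]
  have hdual_eq : ∀ ω : U → ℝ, IsDual actU ω → ω = fun u => ω u₀ * ω₀ u := by
    intro ω hω
    funext u
    conv_lhs => rw [← hω₀act u]
    rw [hω.2 _ (hω₀pos u) u₀, mul_comm]
  have hpq : ∀ s : ℝ, 0 < s → s ^ (((p + q : ℚ)) : ℝ) = s ^ (p : ℝ) * s ^ (q : ℝ) := by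
    intro s hs
    rw [← Real.rpow_add hs]
    congr 1
    push_cast
    ring
  constructor
  · refine ⟨fun ω => (ω u₀) ^ (p : ℝ), fun ω => h ω / (ω u₀) ^ (p : ℝ), ⟨?_, ?_⟩, ⟨?_, ?_⟩, ?_⟩
    · intro ω hω
      exact Real.rpow_pos_of_pos (hω.1 u₀) _
    · intro s hs ω hω
      exact Real.mul_rpow hs.le (hω.1 u₀).le
    · intro ω hω
      exact div_pos (hh.1 ω hω) (Real.rpow_pos_of_pos (hω.1 u₀) _)
    · intro s hs ω hω
      have h1 : (0:ℝ) < (ω u₀) ^ (p : ℝ) := Real.rpow_pos_of_pos (hω.1 u₀) _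
      have h2 : (0:ℝ) < s ^ (p : ℝ) := Real.rpow_pos_of_pos hs _
      show h (fun u => s * ω u) / ((s * ω u₀) ^ (p : ℝ)) = s ^ (q : ℝ) * (h ω / (ω u₀) ^ (p : ℝ))
      rw [hh.2 s hs ω hω, Real.mul_rpow hs.le (hω.1 u₀).le, hpq s hs]
      field_simp
    · intro ω hω
      have h1 : ((ω u₀) ^ (p : ℝ)) ≠ 0 := (Real.rpow_pos_of_pos (hω.1 u₀) _).ne'
      field_simp
  · intro f g f' g' hf hg hf' hg' hfg hfg'
    have hspos : 0 < f' ω₀ / f ω₀ := div_pos (hf'.1 ω₀ hω₀dual) (hf.1 ω₀ hω₀dual)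
    have key : ∀ ω, IsDual actU ω → f' ω = (f' ω₀ / f ω₀) * f ω := by
      intro ω hω
      have ht : 0 < ω u₀ := hω.1 u₀
      rw [hdual_eq ω hω, hf'.2 (ω u₀) ht ω₀ hω₀dual, hf.2 (ω u₀) ht ω₀ hω₀dual]
      have hne := (hf.1 ω₀ hω₀dual).ne'
      field_simp
    refine ⟨f' ω₀ / f ω₀, hspos, key, ?_⟩
    intro ω hω
    have h1 := hfg ω hω
    have h2 := hfg' ω hω
    rw [key ω hω] at h2
    have hfpos := hf.1 ω hω
    have hcanc : f ω * ((f' ω₀ / f ω₀) * g' ω) = f ω * g ω := by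
      linear_combination h1 - h2
    have := mul_left_cancel₀ hfpos.ne' hcanc
    rw [← this, inv_mul_cancel_left₀ hspos.ne']
end
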